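/- Let D be a design of strength R−1 (R ≥ 2) with n ≥ R factors, each factor given a normalized orthogonal coding. Let U be an R-element set of factors, s_min = min_{i∈U} s i, and c ∈ U with s c > s_min. Then factor c is not completely confounded by the factors in U ∖ {c}. -/

import Mathlib

open Finset Matrix

/-- A design `D` (rows = runs, coordinates = factors) has strength `t` if in every
projection onto `t` factors every level combination occurs equally often. -/
def hasStrength {N n : ℕ} (s : Fin n → ℕ) (D : Fin N → ∀ i, Fin (s i)) (t : ℕ) : Prop :=
  ∀ T : Finset (Fin n), T.card = t → ∀ x : ∀ i, Fin (s i),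
    (Finset.univ.filter fun r => ∀ i ∈ T, D r i = x i).card = N / ∏ i ∈ T, s i

/-- Normalized orthogonal coding: contrast columns have zero sum and
`Cᵀ C = m • 1` (squared length `m`, pairwise orthogonal). -/
def isNOC {m : ℕ} (C : Fin m → Fin (m - 1) → ℝ) : Prop :=
  (∀ j, ∑ l, C l j = 0) ∧
    ∀ j j', ∑ l, C l j * C l j' = if j = j' then (m : ℝ) else 0

/-- Column (indexed by the tuple `j`) of the interaction model matrix of the set `U`
of factors, evaluated at run `r`. -/
def intCol {N n : ℕ} {s : Fin n → ℕ} (C : ∀ i, Fin (s i) → Fin (s i - 1) → ℝ)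
    (D : Fin N → ∀ i, Fin (s i)) (U : Finset (Fin n))
    (j : ∀ i : U, Fin (s i.1 - 1)) (r : Fin N) : ℝ :=
  ∏ i : U, C i.1 (D r i.1) (j i)

/-- Projection frequency `a_k(U)`: sum of squared column sums of the interaction
model matrix of `U`, divided by `N²`. -/
noncomputable def projFreq {N n : ℕ} {s : Fin n → ℕ}
    (C : ∀ i, Fin (s i) → Fin (s i - 1) → ℝ)
    (D : Fin N → ∀ i, Fin (s i)) (U : Finset (Fin n)) : ℝ :=
  (∑ j : ∀ i : U, Fin (s i.1 - 1), (∑ r, intCol C D U j r) ^ 2) / (N : ℝ) ^ 2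

/-- The set of columns of the full model matrix `F_C` of a set `Cset` of factors:
the all-ones column together with all columns of the interaction model matrices
of all nonempty subsets of `Cset`. -/
def fullCols {N n : ℕ} {s : Fin n → ℕ} (C : ∀ i, Fin (s i) → Fin (s i - 1) → ℝ)
    (D : Fin N → ∀ i, Fin (s i)) (Cset : Finset (Fin n)) : Set (Fin N → ℝ) :=
  {(fun _ => 1 : Fin N → ℝ)} ∪
    {v | ∃ S : Finset (Fin n), S ⊆ Cset ∧ S.Nonempty ∧
      ∃ j : ∀ i : S, Fin (s i.1 - 1), v = fun r => intCol C D S j r}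

/-- Factor `c` is completely confounded by the factors in `Cset` if every column of
its main-effects model matrix lies in the span of the columns of `F_Cset`. -/
def confounded {N n : ℕ} {s : Fin n → ℕ} (C : ∀ i, Fin (s i) → Fin (s i - 1) → ℝ)
    (D : Fin N → ∀ i, Fin (s i)) (c : Fin n) (Cset : Finset (Fin n)) : Prop :=
  ∀ j : Fin (s c - 1), (fun r => C c (D r c) j) ∈ Submodule.span ℝ (fullCols C D Cset)

def dotp {N : ℕ} (u v : Fin N → ℝ) : ℝ := ∑ r, u r * v r

lemma dotp_nonneg {N : ℕ} (u : Fin N → ℝ) : 0 ≤ dotp u u :=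
  Finset.sum_nonneg fun r _ => mul_self_nonneg _

lemma dotp_comm {N : ℕ} (u v : Fin N → ℝ) : dotp u v = dotp v u := by
  simp [dotp, mul_comm]

lemma dotp_sub_left {N : ℕ} (f g h : Fin N → ℝ) :
    dotp (fun r => f r - g r) h = dotp f h - dotp g h := by
  simp [dotp, sub_mul, Finset.sum_sub_distrib]

lemma dotp_scaled_sum_left {N : ℕ} {ι : Type*} [Fintype ι] (β : ℝ) (c : ι → ℝ)
    (x : ι → Fin N → ℝ) (h : Fin N → ℝ) :
    dotp (fun r => β * ∑ a, c a * x a r) h = β * ∑ a, c a * dotp (x a) h := by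
  unfold dotp
  simp only [Finset.mul_sum, Finset.sum_mul, mul_assoc]
  rw [Finset.sum_comm]

/-- the linear functional `w ↦ dotp u w`. -/
def dotpL {N : ℕ} (u : Fin N → ℝ) : (Fin N → ℝ) →ₗ[ℝ] ℝ where
  toFun v := dotp u v
  map_add' v w := by simp [dotp, mul_add, Finset.sum_add_distrib]
  map_smul' a v := by simp [dotp, Finset.mul_sum, mul_left_comm, smul_eq_mul]

lemma masterA_base {N n : ℕ} {s : Fin n → ℕ} {t : ℕ}
    (hs : ∀ i, 2 ≤ s i) (D : Fin N → ∀ i, Fin (s i)) (hD : hasStrength s D t)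
    (T : Finset (Fin n)) (hT : T.card = t) (g : ∀ i, Fin (s i) → ℝ) :
    ∑ r, ∏ i ∈ T, g i (D r i) = ((N : ℝ) / ∏ i ∈ T, (s i : ℝ)) * ∏ i ∈ T, ∑ l, g i l := by
  classical
  set φ : Fin N → (∀ i : T, Fin (s i.1)) := fun r i => D r i.1 with hφ
  have hcount : ∀ y : (∀ i : T, Fin (s i.1)),
      (Finset.univ.filter fun r => φ r = y).card = N / ∏ i ∈ T, s i := by
    intro y
    set x : ∀ i, Fin (s i) :=
      fun i => if h : i ∈ T then y ⟨i, h⟩ else ⟨0, by have := hs i; omega⟩ with hxdef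
    rw [← hD T hT x]
    congr 1
    apply Finset.filter_congr
    intro r _
    constructor
    · intro h i hi
      have h2 := congrFun h ⟨i, hi⟩
      simpa [hφ, hxdef, dif_pos hi] using h2
    · intro h
      funext i
      have h2 := h i.1 i.2
      simpa [hφ, hxdef, dif_pos i.2] using h2
  have hdvd : (∏ i ∈ T, s i) * (N / ∏ i ∈ T, s i) = N := by
    have h1 : (Finset.univ : Finset (Fin N)).card
        = ∑ y : (∀ i : T, Fin (s i.1)), (Finset.univ.filter fun r => φ r = y).card :=
      Finset.card_eq_sum_card_fiberwise (fun x _ => Finset.mem_univ (φ x))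
    rw [Finset.card_univ, Fintype.card_fin] at h1
    have h2 : ∑ y : (∀ i : T, Fin (s i.1)), (Finset.univ.filter fun r => φ r = y).card
        = (∏ i ∈ T, s i) * (N / ∏ i ∈ T, s i) := by
      simp only [hcount]
      rw [Finset.sum_const, Finset.card_univ, smul_eq_mul, Fintype.card_pi]
      congr 1
      simp only [Fintype.card_fin]
      rw [← Finset.prod_coe_sort T (fun i => s i)]
    rw [h2] at h1
    exact h1.symm
  have hcast : ((N / ∏ i ∈ T, s i : ℕ) : ℝ) = (N : ℝ) / ∏ i ∈ T, (s i : ℝ) := by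
    have hP : (0:ℝ) < ∏ i ∈ T, (s i : ℝ) :=
      Finset.prod_pos fun i _ => by have := hs i; positivity
    have := congrArg (fun z : ℕ => (z : ℝ)) hdvd
    push_cast at this
    rw [eq_div_iff (ne_of_gt hP)]
    linarith [this]
  -- main computation
  have hval : ∀ r, ∏ i ∈ T, g i (D r i) = ∏ i : T, g i.1 (φ r i) := by
    intro r
    rw [Finset.prod_coe_sort T (fun i => g i (D r i))]
  calc ∑ r, ∏ i ∈ T, g i (D r i)
      = ∑ y : (∀ i : T, Fin (s i.1)), ∑ r ∈ Finset.univ.filter fun r => φ r = y,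
          ∏ i ∈ T, g i (D r i) :=
        (Finset.sum_fiberwise_of_maps_to (fun x _ => Finset.mem_univ (φ x)) _).symm
    _ = ∑ y : (∀ i : T, Fin (s i.1)), ((N / ∏ i ∈ T, s i : ℕ) : ℝ) * ∏ i : T, g i.1 (y i) := by
        refine Finset.sum_congr rfl fun y _ => ?_
        rw [Finset.sum_congr rfl (fun r hr => ?_), Finset.sum_const, hcount y, nsmul_eq_mul]
        rw [hval r, (Finset.mem_filter.mp hr).2]
    _ = ((N : ℝ) / ∏ i ∈ T, (s i : ℝ)) * ∏ i ∈ T, ∑ l, g i l := by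
        rw [← Finset.mul_sum, hcast]
        congr 1
        rw [← Fintype.prod_sum (fun (i : T) (l : Fin (s i.1)) => g i.1 l)]
        rw [Finset.prod_coe_sort T (fun i => ∑ l, g i l)]

lemma masterA {N n : ℕ} {s : Fin n → ℕ} {t : ℕ} (ht : t ≤ n)
    (hs : ∀ i, 2 ≤ s i) (D : Fin N → ∀ i, Fin (s i)) (hD : hasStrength s D t)
    (T : Finset (Fin n)) (hT : T.card ≤ t) (g : ∀ i, Fin (s i) → ℝ) :
    ∑ r, ∏ i ∈ T, g i (D r i) = ((N : ℝ) / ∏ i ∈ T, (s i : ℝ)) * ∏ i ∈ T, ∑ l, g i l := by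
  classical
  obtain ⟨T', hTT', -, hT'⟩ :=
    Finset.exists_subsuperset_card_eq (Finset.subset_univ T) hT (by simpa using ht)
  set g' : ∀ i, Fin (s i) → ℝ := fun i => if i ∈ T then g i else fun _ => 1 with hg'
  have hbase := masterA_base hs D hD T' hT' g'
  have hL : ∀ r, ∏ i ∈ T', g' i (D r i) = ∏ i ∈ T, g i (D r i) := by
    intro r
    rw [← Finset.prod_subset hTT' (fun i _ hni => by simp [hg', if_neg hni])]
    exact Finset.prod_congr rfl fun i hi => by simp [hg', if_pos hi]
  have hA : (0:ℝ) < ∏ i ∈ T' \ T, (s i : ℝ) :=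
    Finset.prod_pos fun i _ => by have := hs i; positivity
  have hB : (0:ℝ) < ∏ i ∈ T, (s i : ℝ) :=
    Finset.prod_pos fun i _ => by have := hs i; positivity
  have hsplit : (∏ i ∈ T' \ T, (s i : ℝ)) * ∏ i ∈ T, (s i : ℝ) = ∏ i ∈ T', (s i : ℝ) :=
    Finset.prod_sdiff hTT'
  have hR1 : ∏ i ∈ T' \ T, ∑ l, g' i l = ∏ i ∈ T' \ T, (s i : ℝ) := by
    refine Finset.prod_congr rfl fun i hi => ?_
    have hni : i ∉ T := (Finset.mem_sdiff.mp hi).2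
    simp [hg', if_neg hni]
  have hR2 : ∏ i ∈ T, ∑ l, g' i l = ∏ i ∈ T, ∑ l, g i l :=
    Finset.prod_congr rfl fun i hi => by simp [hg', if_pos hi]
  rw [Finset.sum_congr rfl (fun r _ => (hL r).symm), hbase,
    ← Finset.prod_sdiff hTT' (f := fun i => ∑ l, g' i l), hR1, hR2, ← hsplit]
  field_simp

lemma intCol_eq_prod {N n : ℕ} {s : Fin n → ℕ} (C : ∀ i, Fin (s i) → Fin (s i - 1) → ℝ)
    (D : Fin N → ∀ i, Fin (s i)) (S : Finset (Fin n))
    (j : ∀ i : S, Fin (s i.1 - 1)) (r : Fin N) :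
    (∏ i : S, C i.1 (D r i.1) (j i))
      = ∏ i ∈ S, (if h : i ∈ S then C i (D r i) (j ⟨i, h⟩) else 1) := by
  rw [← Finset.prod_attach S (fun i => if h : i ∈ S then C i (D r i) (j ⟨i, h⟩) else 1),
    Finset.univ_eq_attach]
  exact Finset.prod_congr rfl fun i _ => by rw [dif_pos i.2]

section Dots

variable {N n : ℕ} {s : Fin n → ℕ} {t : ℕ}
  (ht : t ≤ n) (hs : ∀ i, 2 ≤ s i)
  (D : Fin N → ∀ i, Fin (s i)) (hD : hasStrength s D t)
  (C : ∀ i, Fin (s i) → Fin (s i - 1) → ℝ) (hC : ∀ i, isNOC (C i))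

include ht hs hD hC

lemma ortho_intCol (E : Finset (Fin n)) (hE : E.card ≤ t)
    (J J' : ∀ i : E, Fin (s i.1 - 1)) :
    dotp (fun r => intCol C D E J r) (fun r => intCol C D E J' r)
      = if J = J' then (N : ℝ) else 0 := by
  classical
  have key := masterA ht hs D hD E hE
    (fun i l => if h : i ∈ E then C i l (J ⟨i, h⟩) * C i l (J' ⟨i, h⟩) else 1)
  have hL : dotp (fun r => intCol C D E J r) (fun r => intCol C D E J' r)
      = ∑ r, ∏ i ∈ E, (if h : i ∈ E then C i (D r i) (J ⟨i, h⟩) * C i (D r i) (J' ⟨i, h⟩) else 1) := by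
    refine Finset.sum_congr rfl fun r _ => ?_
    show intCol C D E J r * intCol C D E J' r = _
    rw [intCol, intCol, intCol_eq_prod C D E J r, intCol_eq_prod C D E J' r,
      ← Finset.prod_mul_distrib]
    exact Finset.prod_congr rfl fun i hi => by rw [dif_pos hi, dif_pos hi, dif_pos hi]
  have hfac : ∀ i, ∀ hi : i ∈ E,
      (∑ l, if h : i ∈ E then C i l (J ⟨i, h⟩) * C i l (J' ⟨i, h⟩) else 1)
      = if (J ⟨i, hi⟩ : Fin (s i - 1)) = J' ⟨i, hi⟩ then (s i : ℝ) else 0 := by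
    intro i hi
    have h1 : ∀ l : Fin (s i), (if h : i ∈ E then C i l (J ⟨i, h⟩) * C i l (J' ⟨i, h⟩) else 1)
        = C i l (J ⟨i, hi⟩) * C i l (J' ⟨i, hi⟩) := fun l => by rw [dif_pos hi]
    rw [Finset.sum_congr rfl fun l _ => h1 l]
    exact (hC i).2 _ _
  by_cases hJJ : J = J'
  · subst hJJ
    have h1 : (∏ i ∈ E, ∑ l, if h : i ∈ E then C i l (J ⟨i, h⟩) * C i l (J ⟨i, h⟩) else 1)
        = ∏ i ∈ E, (s i : ℝ) :=
      Finset.prod_congr rfl fun i hi => by rw [hfac i hi, if_pos rfl]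
    have hB : (0:ℝ) < ∏ i ∈ E, (s i : ℝ) :=
      Finset.prod_pos fun i _ => by have := hs i; positivity
    rw [if_pos rfl, hL, key, h1]
    field_simp
  · obtain ⟨i₀, hi₀⟩ := Function.ne_iff.mp hJJ
    have h0 : (∏ i ∈ E, ∑ l, if h : i ∈ E then C i l (J ⟨i, h⟩) * C i l (J' ⟨i, h⟩) else 1)
        = 0 :=
      Finset.prod_eq_zero i₀.2 (by rw [hfac i₀.1 i₀.2]; exact if_neg hi₀)
    rw [if_neg hJJ, hL, key, h0, mul_zero]

lemma col_dot_one (E : Finset (Fin n)) (hE : E.card ≤ t) (hne : E.Nonempty)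
    (J : ∀ i : E, Fin (s i.1 - 1)) :
    dotp (fun r => intCol C D E J r) (fun _ => 1) = 0 := by
  classical
  have key := masterA ht hs D hD E hE
    (fun i l => if h : i ∈ E then C i l (J ⟨i, h⟩) else 1)
  have hL : dotp (fun r => intCol C D E J r) (fun _ => 1)
      = ∑ r, ∏ i ∈ E, (if h : i ∈ E then C i (D r i) (J ⟨i, h⟩) else 1) := by
    refine Finset.sum_congr rfl fun r _ => ?_
    show intCol C D E J r * 1 = _
    rw [mul_one, intCol, intCol_eq_prod C D E J r]
  obtain ⟨i₀, hi₀⟩ := hne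
  have h0 : (∏ i ∈ E, ∑ l, if h : i ∈ E then C i l (J ⟨i, h⟩) else 1) = 0 := by
    refine Finset.prod_eq_zero hi₀ ?_
    have h1 : ∀ l : Fin (s i₀), (if h : i₀ ∈ E then C i₀ l (J ⟨i₀, h⟩) else 1)
        = C i₀ l (J ⟨i₀, hi₀⟩) := fun l => by rw [dif_pos hi₀]
    rw [Finset.sum_congr rfl fun l _ => h1 l]
    exact (hC i₀).1 _
  rw [hL, key, h0, mul_zero]

lemma main_dot (ht1 : 1 ≤ t) (c : Fin n) (a b : Fin (s c - 1)) :
    dotp (fun r => C c (D r c) a) (fun r => C c (D r c) b)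
      = if a = b then (N : ℝ) else 0 := by
  classical
  have hcard : ({c} : Finset (Fin n)).card ≤ t := by simp [ht1]
  have key := masterA ht hs D hD {c} hcard
    (fun i l => if h : i = c then
        C i l (Fin.cast (congrArg (fun z => s z - 1) h.symm) a)
          * C i l (Fin.cast (congrArg (fun z => s z - 1) h.symm) b) else 1)
  have hL : dotp (fun r => C c (D r c) a) (fun r => C c (D r c) b)
      = ∑ r, ∏ i ∈ ({c} : Finset (Fin n)), (if h : i = c then
          C i (D r i) (Fin.cast (congrArg (fun z => s z - 1) h.symm) a)
            * C i (D r i) (Fin.cast (congrArg (fun z => s z - 1) h.symm) b) else 1) := by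
    refine Finset.sum_congr rfl fun r _ => ?_
    show C c (D r c) a * C c (D r c) b = _
    rw [Finset.prod_singleton, dif_pos rfl]; rfl
  have h1 : ∀ l : Fin (s c), (if h : c = c then
          C c l (Fin.cast (congrArg (fun z => s z - 1) h.symm) a)
            * C c l (Fin.cast (congrArg (fun z => s z - 1) h.symm) b) else 1)
      = C c l a * C c l b := fun l => by rw [dif_pos rfl]; rfl
  rw [hL, key, Finset.prod_singleton, Finset.prod_singleton,
    Finset.sum_congr rfl fun l _ => h1 l, (hC c).2 a b]
  have hsc : (0:ℝ) < (s c : ℝ) := by have := hs c; positivity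
  by_cases hab : a = b
  · rw [if_pos hab, if_pos hab]
    field_simp
  · rw [if_neg hab, if_neg hab, mul_zero]

lemma main_dot_one (ht1 : 1 ≤ t) (c : Fin n) (a : Fin (s c - 1)) :
    dotp (fun r => C c (D r c) a) (fun _ => 1) = 0 := by
  classical
  have hcard : ({c} : Finset (Fin n)).card ≤ t := by simp [ht1]
  have key := masterA ht hs D hD {c} hcard
    (fun i l => if h : i = c then
        C i l (Fin.cast (congrArg (fun z => s z - 1) h.symm) a) else 1)
  have hL : dotp (fun r => C c (D r c) a) (fun _ => 1)
      = ∑ r, ∏ i ∈ ({c} : Finset (Fin n)), (if h : i = c then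
          C i (D r i) (Fin.cast (congrArg (fun z => s z - 1) h.symm) a) else 1) := by
    refine Finset.sum_congr rfl fun r _ => ?_
    show C c (D r c) a * 1 = _
    rw [mul_one, Finset.prod_singleton, dif_pos rfl]; rfl
  have h1 : ∀ l : Fin (s c), (if h : c = c then
          C c l (Fin.cast (congrArg (fun z => s z - 1) h.symm) a) else 1)
      = C c l a := fun l => by rw [dif_pos rfl]; rfl
  rw [hL, key, Finset.prod_singleton, Finset.prod_singleton,
    Finset.sum_congr rfl fun l _ => h1 l, (hC c).1 a, mul_zero]

lemma main_dot_col (c : Fin n) (a : Fin (s c - 1)) (S : Finset (Fin n)) (hcS : c ∉ S)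
    (hScard : S.card + 1 ≤ t) (j : ∀ i : S, Fin (s i.1 - 1)) :
    dotp (fun r => C c (D r c) a) (fun r => intCol C D S j r) = 0 := by
  classical
  have hcard : (insert c S).card ≤ t := by
    rw [Finset.card_insert_of_notMem hcS]; omega
  have key := masterA ht hs D hD (insert c S) hcard
    (fun i l => if h : i = c then
        C i l (Fin.cast (congrArg (fun z => s z - 1) h.symm) a)
      else if h' : i ∈ S then C i l (j ⟨i, h'⟩) else 1)
  have hL : dotp (fun r => C c (D r c) a) (fun r => intCol C D S j r)
      = ∑ r, ∏ i ∈ insert c S, (if h : i = c then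
          C i (D r i) (Fin.cast (congrArg (fun z => s z - 1) h.symm) a)
        else if h' : i ∈ S then C i (D r i) (j ⟨i, h'⟩) else 1) := by
    refine Finset.sum_congr rfl fun r _ => ?_
    show C c (D r c) a * intCol C D S j r = _
    rw [Finset.prod_insert hcS, dif_pos rfl, intCol, intCol_eq_prod C D S j r]
    show _ = C c (D r c) (Fin.cast (congrArg (fun z => s z - 1) (rfl : c = c).symm) a) * _
    congr 1
    refine Finset.prod_congr rfl fun i hi => ?_
    have hic : i ≠ c := fun he => hcS (he ▸ hi)
    rw [dif_pos hi, dif_neg hic]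
  have h0 : (∏ i ∈ insert c S, ∑ l, (if h : i = c then
          C i l (Fin.cast (congrArg (fun z => s z - 1) h.symm) a)
        else if h' : i ∈ S then C i l (j ⟨i, h'⟩) else 1)) = 0 := by
    refine Finset.prod_eq_zero (Finset.mem_insert_self c S) ?_
    have h1 : ∀ l : Fin (s c), (if h : c = c then
          C c l (Fin.cast (congrArg (fun z => s z - 1) h.symm) a)
        else if h' : c ∈ S then C c l (j ⟨c, h'⟩) else 1) = C c l a :=
      fun l => by rw [dif_pos rfl]; rfl
    rw [Finset.sum_congr rfl fun l _ => h1 l]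
    exact (hC c).1 a
  rw [hL, key, h0, mul_zero]

lemma col_dot_col_ssub (E : Finset (Fin n)) (hE : E.card ≤ t)
    (S : Finset (Fin n)) (hSE : S ⊂ E)
    (J : ∀ i : E, Fin (s i.1 - 1)) (j : ∀ i : S, Fin (s i.1 - 1)) :
    dotp (fun r => intCol C D E J r) (fun r => intCol C D S j r) = 0 := by
  classical
  have key := masterA ht hs D hD E hE
    (fun i l => if h : i ∈ E then
        C i l (J ⟨i, h⟩) * (if h' : i ∈ S then C i l (j ⟨i, h'⟩) else 1) else 1)
  have hL : dotp (fun r => intCol C D E J r) (fun r => intCol C D S j r)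
      = ∑ r, ∏ i ∈ E, (if h : i ∈ E then
          C i (D r i) (J ⟨i, h⟩) * (if h' : i ∈ S then C i (D r i) (j ⟨i, h'⟩) else 1)
        else 1) := by
    refine Finset.sum_congr rfl fun r _ => ?_
    show intCol C D E J r * intCol C D S j r = _
    rw [intCol, intCol, intCol_eq_prod C D E J r, intCol_eq_prod C D S j r,
      Finset.prod_subset hSE.subset
        (f := fun i => if h' : i ∈ S then C i (D r i) (j ⟨i, h'⟩) else 1)
        (fun i _ hni => by exact dif_neg hni),
      ← Finset.prod_mul_distrib]
    exact Finset.prod_congr rfl fun i hi => by rw [dif_pos hi]; rw [dif_pos hi]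
  obtain ⟨i₀, hi₀E, hi₀S⟩ := Finset.exists_of_ssubset hSE
  have h0 : (∏ i ∈ E, ∑ l, (if h : i ∈ E then
          C i l (J ⟨i, h⟩) * (if h' : i ∈ S then C i l (j ⟨i, h'⟩) else 1) else 1)) = 0 := by
    refine Finset.prod_eq_zero hi₀E ?_
    have h1 : ∀ l : Fin (s i₀), (if h : i₀ ∈ E then
          C i₀ l (J ⟨i₀, h⟩) * (if h' : i₀ ∈ S then C i₀ l (j ⟨i₀, h'⟩) else 1) else 1)
        = C i₀ l (J ⟨i₀, hi₀E⟩) := fun l => by rw [dif_pos hi₀E, dif_neg hi₀S, mul_one]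
    rw [Finset.sum_congr rfl fun l _ => h1 l]
    exact (hC i₀).1 _
  rw [hL, key, h0, mul_zero]

end Dots

section Bessel

variable {N : ℕ} {ι : Type*} [Fintype ι] [DecidableEq ι]

lemma residual_dot (hN : (0:ℝ) < (N:ℝ)) (x : ι → Fin N → ℝ)
    (hx : ∀ a b, dotp (x a) (x b) = if a = b then (N:ℝ) else 0) (v : Fin N → ℝ) :
    dotp (fun r => v r - (N:ℝ)⁻¹ * ∑ a, dotp v (x a) * x a r)
         (fun r => v r - (N:ℝ)⁻¹ * ∑ a, dotp v (x a) * x a r)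
      = dotp v v - (∑ a, (dotp v (x a))^2) / N := by
  have hN0 : (N:ℝ) ≠ 0 := ne_of_gt hN
  set w : Fin N → ℝ := fun r => (N:ℝ)⁻¹ * ∑ a, dotp v (x a) * x a r with hw
  have hvw : dotp v w = (∑ a, (dotp v (x a))^2) / N := by
    rw [dotp_comm, hw, dotp_scaled_sum_left]
    rw [Finset.sum_congr rfl fun a _ => by rw [dotp_comm (x a) v]]
    rw [Finset.sum_congr rfl fun a _ => (sq (dotp v (x a))).symm]
    rw [inv_mul_eq_div]
  have hxw : ∀ a, dotp (x a) w = dotp v (x a) := by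
    intro a
    rw [dotp_comm, hw, dotp_scaled_sum_left]
    have h1 : ∀ b, dotp v (x b) * dotp (x b) (x a)
        = if b = a then dotp v (x a) * N else 0 := by
      intro b
      rw [hx b a]
      by_cases hba : b = a
      · subst hba; rw [if_pos rfl, if_pos rfl]
      · rw [if_neg hba, if_neg hba, mul_zero]
    rw [Finset.sum_congr rfl fun b _ => h1 b, Finset.sum_ite_eq' Finset.univ a
      (fun _ => dotp v (x a) * (N:ℝ)), if_pos (Finset.mem_univ a)]
    field_simp
  have hww : dotp w w = (∑ a, (dotp v (x a))^2) / N := by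
    have e : dotp w w = (N:ℝ)⁻¹ * ∑ a, dotp v (x a) * dotp (x a) w := by
      rw [hw]
      exact dotp_scaled_sum_left _ _ _ _
    rw [e, Finset.sum_congr rfl fun a _ => by rw [hxw a]]
    rw [Finset.sum_congr rfl fun a _ => (sq (dotp v (x a))).symm, inv_mul_eq_div]
  have hwv : dotp w v = (∑ a, (dotp v (x a))^2) / N := by rw [dotp_comm]; exact hvw
  have e1 : dotp (fun r => v r - w r) (fun r => v r - w r)
      = dotp v v - dotp w v - (dotp v w - dotp w w) := by
    rw [dotp_sub_left v w (fun r => v r - w r)]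
    rw [dotp_comm v (fun r => v r - w r), dotp_sub_left v w v,
      dotp_comm w (fun r => v r - w r), dotp_sub_left v w w]
  rw [e1, hvw, hww, hwv]
  ring

lemma bessel_le (hN : (0:ℝ) < (N:ℝ)) (x : ι → Fin N → ℝ)
    (hx : ∀ a b, dotp (x a) (x b) = if a = b then (N:ℝ) else 0) (v : Fin N → ℝ) :
    ∑ a, (dotp v (x a))^2 ≤ (N:ℝ) * dotp v v := by
  have h := residual_dot hN x hx v
  have h0 := dotp_nonneg (fun r => v r - (N:ℝ)⁻¹ * ∑ a, dotp v (x a) * x a r)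
  rw [h] at h0
  rw [sub_nonneg, div_le_iff₀ hN] at h0
  calc ∑ a, (dotp v (x a))^2 ≤ dotp v v * N := h0
    _ = (N:ℝ) * dotp v v := mul_comm _ _

lemma parseval_eq (hN : (0:ℝ) < (N:ℝ)) (x : ι → Fin N → ℝ)
    (hx : ∀ a b, dotp (x a) (x b) = if a = b then (N:ℝ) else 0) (v : Fin N → ℝ)
    (G : Set (Fin N → ℝ)) (hvG : v ∈ Submodule.span ℝ G) (hxG : ∀ a, x a ∈ G)
    (hperp : ∀ g ∈ G,
      dotp (fun r => v r - (N:ℝ)⁻¹ * ∑ a, dotp v (x a) * x a r) g = 0) :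
    ∑ a, (dotp v (x a))^2 = (N:ℝ) * dotp v v := by
  have hN0 : (N:ℝ) ≠ 0 := ne_of_gt hN
  set u : Fin N → ℝ := fun r => v r - (N:ℝ)⁻¹ * ∑ a, dotp v (x a) * x a r with hu
  have huspan : u ∈ Submodule.span ℝ G := by
    have hw : (fun r => (N:ℝ)⁻¹ * ∑ a, dotp v (x a) * x a r) ∈ Submodule.span ℝ G := by
      have heq : (fun r => (N:ℝ)⁻¹ * ∑ a, dotp v (x a) * x a r)
          = (N:ℝ)⁻¹ • ∑ a, dotp v (x a) • x a := by
        funext r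
        simp [Finset.sum_apply, smul_eq_mul]
      rw [heq]
      exact Submodule.smul_mem _ _ (Submodule.sum_mem _ fun a _ =>
        Submodule.smul_mem _ _ (Submodule.subset_span (hxG a)))
    have heq2 : u = v - fun r => (N:ℝ)⁻¹ * ∑ a, dotp v (x a) * x a r := by
      funext r; simp [hu]
    rw [heq2]
    exact Submodule.sub_mem _ hvG hw
  have hzero : dotp u u = 0 := by
    have hle : Submodule.span ℝ G ≤ LinearMap.ker (dotpL u) :=
      Submodule.span_le.mpr fun g hg => by
        exact hperp g hg
    have hker := hle huspan
    exact hker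
  have h := residual_dot hN x hx v
  rw [← hu, hzero] at h
  have h2 : (∑ a, (dotp v (x a))^2) / N = dotp v v := by linarith
  rw [div_eq_iff hN0] at h2
  rw [h2, mul_comm]

end Bessel

set_option maxHeartbeats 1000000 in
lemma sumB {N n : ℕ} {s : Fin n → ℕ} (C : ∀ i, Fin (s i) → Fin (s i - 1) → ℝ)
    (D : Fin N → ∀ i, Fin (s i)) (U : Finset (Fin n)) (c : Fin n) (hc : c ∈ U) :
    ∑ K : ∀ i : U, Fin (s i.1 - 1), (∑ r, intCol C D U K r)^2
      = ∑ a : Fin (s c - 1), ∑ J : ∀ i : (U.erase c), Fin (s i.1 - 1),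
          (dotp (fun r => C c (D r c) a)
            (fun r => intCol C D (U.erase c) J r))^2 := by
  classical
  set φ : (∀ i : U, Fin (s i.1 - 1)) → (Fin (s c - 1) × ∀ i : (U.erase c), Fin (s i.1 - 1)) :=
    fun K => (K ⟨c, hc⟩, fun i => K ⟨i.1, Finset.mem_of_mem_erase i.2⟩) with hφ
  have hbij : Function.Bijective φ := by
    constructor
    · intro K K' h
      funext i
      by_cases hic : i.1 = c
      · have hieq : i = ⟨c, hc⟩ := Subtype.ext hic
        subst hieq
        exact congrArg Prod.fst h
      · have hiE : i.1 ∈ U.erase c := Finset.mem_erase.mpr ⟨hic, i.2⟩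
        exact congrFun (congrArg Prod.snd h) ⟨i.1, hiE⟩
    · rintro ⟨a, J⟩
      refine ⟨fun i => if h : i.1 = c then Fin.cast (congrArg (fun z => s z - 1) h.symm) a
        else J ⟨i.1, Finset.mem_erase.mpr ⟨h, i.2⟩⟩, ?_⟩
      have h1 : (if h : (c : Fin n) = c then
          Fin.cast (congrArg (fun z => s z - 1) h.symm) a
          else J ⟨c, Finset.mem_erase.mpr ⟨h, hc⟩⟩) = a := by rw [dif_pos rfl]; rfl
      refine Prod.ext ?_ ?_
      · exact h1
      · funext i
        have hic : i.1 ≠ c := (Finset.mem_erase.mp i.2).1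
        show (if h : i.1 = c then Fin.cast (congrArg (fun z => s z - 1) h.symm) a
          else J ⟨i.1, Finset.mem_erase.mpr ⟨h, Finset.mem_of_mem_erase i.2⟩⟩) = J i
        rw [dif_neg hic]
  have hpt : ∀ K : ∀ i : U, Fin (s i.1 - 1),
      (∑ r, intCol C D U K r)
        = dotp (fun r => C c (D r c) (K ⟨c, hc⟩))
            (fun r => intCol C D (U.erase c) (fun i => K ⟨i.1, Finset.mem_of_mem_erase i.2⟩) r) := by
    intro K
    unfold dotp
    refine Finset.sum_congr rfl fun r _ => ?_
    show intCol C D U K r = C c (D r c) (K ⟨c, hc⟩)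
      * intCol C D (U.erase c) (fun i => K ⟨i.1, Finset.mem_of_mem_erase i.2⟩) r
    rw [intCol, intCol, intCol_eq_prod C D U K r,
      intCol_eq_prod C D (U.erase c) (fun i => K ⟨i.1, Finset.mem_of_mem_erase i.2⟩) r,
      ← Finset.mul_prod_erase U _ hc]
    congr 1
    · exact dif_pos hc
    · refine Finset.prod_congr rfl fun i hi => ?_
      rw [dif_pos (Finset.mem_of_mem_erase hi), dif_pos hi]
  calc ∑ K : ∀ i : U, Fin (s i.1 - 1), (∑ r, intCol C D U K r)^2
      = ∑ K : ∀ i : U, Fin (s i.1 - 1),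
          (fun p : (Fin (s c - 1) × ∀ i : (U.erase c), Fin (s i.1 - 1)) =>
            (dotp (fun r => C c (D r c) p.1)
              (fun r => intCol C D (U.erase c) p.2 r))^2) (φ K) := by
        refine Finset.sum_congr rfl fun K _ => ?_
        rw [hpt K]
    _ = ∑ p : Fin (s c - 1) × ∀ i : (U.erase c), Fin (s i.1 - 1),
          (dotp (fun r => C c (D r c) p.1)
            (fun r => intCol C D (U.erase c) p.2 r))^2 :=
        hbij.sum_comp (fun p => (dotp (fun r => C c (D r c) p.1)
          (fun r => intCol C D (U.erase c) p.2 r))^2)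
    _ = _ := Fintype.sum_prod_type _

/-- a factor `c ∈ U` with more than the minimum number of levels in `U`
cannot be completely confounded by the other factors of `U`. -/
theorem statement4 {N n R : ℕ} (hN : 1 ≤ N) (hR : 2 ≤ R) (hn : R ≤ n)
    {s : Fin n → ℕ} (hs : ∀ i, 2 ≤ s i)
    (D : Fin N → ∀ i, Fin (s i)) (hD : hasStrength s D (R - 1))
    (C : ∀ i, Fin (s i) → Fin (s i - 1) → ℝ) (hC : ∀ i, isNOC (C i))
    (U : Finset (Fin n)) (hU : U.card = R) (c : Fin n) (hc : c ∈ U)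
    (hgt : ∃ k ∈ U, s k < s c) :
    ¬ confounded C D c (U.erase c) := by
  classical
  intro hconf
  obtain ⟨k, hkU, hklt⟩ := hgt
  have hkc : k ≠ c := fun h => by rw [h] at hklt; exact lt_irrefl _ hklt
  have ht : R - 1 ≤ n := by omega
  have ht1 : 1 ≤ R - 1 := by omega
  have hNR : (0:ℝ) < (N:ℝ) := by
    have : (0:ℕ) < N := hN
    exact_mod_cast this
  have hN0 : (N:ℝ) ≠ 0 := ne_of_gt hNR
  have hEcard : (U.erase c).card = R - 1 := by rw [Finset.card_erase_of_mem hc, hU]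
  have hE'card : (U.erase k).card = R - 1 := by rw [Finset.card_erase_of_mem hkU, hU]
  have hEne : (U.erase c).Nonempty := by rw [← Finset.card_pos, hEcard]; omega
  have hcE : c ∉ U.erase c := Finset.notMem_erase c U
  have hx : ∀ J J' : ∀ i : (U.erase c), Fin (s i.1 - 1),
      dotp (fun r => intCol C D (U.erase c) J r) (fun r => intCol C D (U.erase c) J' r)
        = if J = J' then (N:ℝ) else 0 :=
    fun J J' => ortho_intCol ht hs D hD C hC (U.erase c) hEcard.le J J'
  -- c-side : Parseval
  have hS1 : ∀ a : Fin (s c - 1),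
      ∑ J : ∀ i : (U.erase c), Fin (s i.1 - 1),
        (dotp (fun r => C c (D r c) a) (fun r => intCol C D (U.erase c) J r))^2
        = (N:ℝ) * (N:ℝ) := by
    intro a
    have hvv : dotp (fun r => C c (D r c) a) (fun r => C c (D r c) a) = (N:ℝ) := by
      have h := main_dot ht hs D hD C hC ht1 c a a
      rwa [if_pos rfl] at h
    refine Eq.trans (parseval_eq hNR (fun J (r : Fin N) => intCol C D (U.erase c) J r) hx
      (fun r => C c (D r c) a) (fullCols C D (U.erase c)) (hconf a)
      (fun J => Or.inr ⟨U.erase c, Finset.Subset.refl _, hEne, J, rfl⟩) ?_) (by rw [hvv])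
    intro g hg
    rcases hg with hg | ⟨S, hSE, hSne, j, rfl⟩
    · have hg1 : g = fun _ => (1:ℝ) := hg
      subst hg1
      rw [dotp_sub_left, dotp_scaled_sum_left,
        main_dot_one ht hs D hD C hC ht1 c a,
        Finset.sum_congr rfl fun J _ => by
          rw [col_dot_one ht hs D hD C hC (U.erase c) hEcard.le hEne J, mul_zero]]
      simp
    · by_cases hSeq : S = U.erase c
      · subst hSeq
        rw [dotp_sub_left, dotp_scaled_sum_left,
          Finset.sum_congr rfl fun J _ => by rw [hx J j, mul_ite, mul_zero],
          Finset.sum_ite_eq' Finset.univ j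
            (fun J => dotp (fun r => C c (D r c) a) (fun r => intCol C D (U.erase c) J r) * (N:ℝ)),
          if_pos (Finset.mem_univ j)]
        field_simp
        ring
      · have hSlt : S ⊂ U.erase c := Finset.ssubset_iff_subset_ne.mpr ⟨hSE, hSeq⟩
        have hcS : c ∉ S := fun hcs => hcE (hSE hcs)
        have hScard : S.card + 1 ≤ R - 1 := by
          have := Finset.card_lt_card hSlt
          omega
        rw [dotp_sub_left, dotp_scaled_sum_left,
          main_dot_col ht hs D hD C hC c a S hcS hScard j,
          Finset.sum_congr rfl fun J _ => by
            rw [col_dot_col_ssub ht hs D hD C hC (U.erase c) hEcard.le S hSlt J j, mul_zero]]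
        simp
  -- k-side : Bessel
  have hS2 : ∀ b : Fin (s k - 1),
      ∑ J : ∀ i : (U.erase k), Fin (s i.1 - 1),
        (dotp (fun r => C k (D r k) b) (fun r => intCol C D (U.erase k) J r))^2
        ≤ (N:ℝ) * (N:ℝ) := by
    intro b
    have hvv : dotp (fun r => C k (D r k) b) (fun r => C k (D r k) b) = (N:ℝ) := by
      have h := main_dot ht hs D hD C hC ht1 k b b
      rwa [if_pos rfl] at h
    have h := bessel_le hNR (fun J (r : Fin N) => intCol C D (U.erase k) J r)
      (fun J J' => ortho_intCol ht hs D hD C hC (U.erase k) hE'card.le J J')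
      (fun r => C k (D r k) b)
    rwa [hvv] at h
  have hTc := sumB C D U c hc
  have hTk := sumB C D U k hkU
  have hceq : (∑ K : ∀ i : U, Fin (s i.1 - 1), (∑ r, intCol C D U K r)^2)
      = ((s c - 1 : ℕ) : ℝ) * ((N:ℝ) * (N:ℝ)) := by
    rw [hTc, Finset.sum_congr rfl fun a _ => hS1 a, Finset.sum_const, Finset.card_univ,
      Fintype.card_fin, nsmul_eq_mul]
  have hkle : (∑ K : ∀ i : U, Fin (s i.1 - 1), (∑ r, intCol C D U K r)^2)
      ≤ ((s k - 1 : ℕ) : ℝ) * ((N:ℝ) * (N:ℝ)) := by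
    rw [hTk]
    calc ∑ b : Fin (s k - 1), ∑ J : ∀ i : (U.erase k), Fin (s i.1 - 1),
          (dotp (fun r => C k (D r k) b) (fun r => intCol C D (U.erase k) J r))^2
        ≤ ∑ _b : Fin (s k - 1), (N:ℝ) * (N:ℝ) :=
          Finset.sum_le_sum fun b _ => hS2 b
      _ = ((s k - 1 : ℕ) : ℝ) * ((N:ℝ) * (N:ℝ)) := by
          rw [Finset.sum_const, Finset.card_univ, Fintype.card_fin, nsmul_eq_mul]
  rw [hceq] at hkle
  have hNN : (0:ℝ) < (N:ℝ) * (N:ℝ) := by positivity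
  have h1 := (mul_le_mul_iff_of_pos_right hNN).mp hkle
  have h2 : (s c - 1 : ℕ) ≤ (s k - 1 : ℕ) := by exact_mod_cast h1
  have hsk := hs k
  omega
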